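/- In the finite-sum setting, suppose the mini-batch gradients are g_k = Σ_{i=1}^n ν_{k,i} ∇f_i(y_k), where each sampling vector ν_k ∈ ℝ^n has nonnegative entries summing to 1 and marginal expectations E[ν_{k,i}] = 1/n. If α and β are chosen so that R(α, β) < 1, then the ASG method satisfies, for all k ≥ 0: E‖y_{k+1} − x*‖ ≤ R(α, β)^k ‖x_0 − x*‖ + (α √((1+β)² + 1) / (1 − R(α, β))) σ, where σ = (1/n) Σ_{i=1}^n ‖∇f_i(x*)‖. -/

import Mathlib

open MeasureTheory

/-- `C_λ(α, β)`. -/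
noncomputable def Clam (α β lam : ℝ) : ℝ :=
  (1 - α * (1 + β) * lam) ^ 2 + α ^ 2 * lam ^ 2 + β ^ 2 * (β ^ 2 + 1)

/-- `R_λ(α, β) = (1/√2)(C_λ + √(C_λ² − 4β²(1−αλ)²))^{1/2}`. -/
noncomputable def Rlam (α β lam : ℝ) : ℝ :=
  (1 / Real.sqrt 2) *
    Real.sqrt (Clam α β lam +
      Real.sqrt ((Clam α β lam) ^ 2 - 4 * β ^ 2 * (1 - α * lam) ^ 2))

/-- `R(α, β) = max_{λ ∈ [μ, L]} R_λ(α, β)`. -/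
noncomputable def Rmax (μ L α β : ℝ) : ℝ :=
  sSup ((fun lam => Rlam α β lam) '' Set.Icc μ L)


lemma quad_nonneg {A B q : ℝ} (h1 : 0 ≤ A) (h2 : 0 ≤ B) (h3 : A*B = q^2) (x y : ℝ) :
    2*q*x*y ≤ A*x^2 + B*y^2 := by
  rcases h1.eq_or_lt with hA0 | hApos
  · have hq : q = 0 := by nlinarith [sq_nonneg q]
    rw [hq]; simp; positivity
  · nlinarith [sq_nonneg (A*x - q*y), sq_nonneg y]

-- L1: 2x2 matrix operator norm bound
lemma two_by_two_bound (a b c d x y : ℝ) :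
    (a*x+b*y)^2 + (c*x+d*y)^2 ≤
      (((a^2+b^2+c^2+d^2) + Real.sqrt ((a^2+b^2+c^2+d^2)^2 - 4*(a*d-b*c)^2))/2) * (x^2+y^2) := by
  set p := a^2+c^2 with hp
  set r := b^2+d^2 with hr
  set q := a*b+c*d with hq
  have hF : a^2+b^2+c^2+d^2 = p + r := by ring
  have hdelta : (a^2+b^2+c^2+d^2)^2 - 4*(a*d-b*c)^2 = (p-r)^2 + 4*q^2 := by
    simp only [hp, hr, hq]; ring
  rw [hdelta, hF]
  set s := Real.sqrt ((p-r)^2+4*q^2) with hs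
  have hs0 : 0 ≤ s := Real.sqrt_nonneg _
  have hs2 : s^2 = (p-r)^2+4*q^2 := Real.sq_sqrt (by positivity)
  have hspr : |p - r| ≤ s := by
    rw [← Real.sqrt_sq_eq_abs]; exact Real.sqrt_le_sqrt (by nlinarith [sq_nonneg q])
  have h1 : 0 ≤ (p+r+s)/2 - p := by cases' abs_le.mp hspr with h h'; linarith
  have h2 : 0 ≤ (p+r+s)/2 - r := by cases' abs_le.mp hspr with h h'; linarith
  have h3 : ((p+r+s)/2 - p) * ((p+r+s)/2 - r) = q^2 := by nlinarith [hs2]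
  have key := quad_nonneg h1 h2 h3 x y
  nlinarith [key]
lemma Clam_nonneg (α β lam : ℝ) : 0 ≤ Clam α β lam := by
  unfold Clam; positivity

lemma Rlam_nonneg (α β lam : ℝ) : 0 ≤ Rlam α β lam := by
  unfold Rlam; positivity

lemma Rlam_sq (α β lam : ℝ) : Rlam α β lam ^ 2 =
    (Clam α β lam + Real.sqrt ((Clam α β lam) ^ 2 - 4 * β ^ 2 * (1 - α * lam) ^ 2)) / 2 := by
  have h2 : (Real.sqrt 2)^2 = 2 := Real.sq_sqrt (by norm_num)
  have hX : 0 ≤ Clam α β lam + Real.sqrt ((Clam α β lam) ^ 2 - 4 * β ^ 2 * (1 - α * lam) ^ 2) := by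
    have := Clam_nonneg α β lam; have := Real.sqrt_nonneg ((Clam α β lam) ^ 2 - 4 * β ^ 2 * (1 - α * lam) ^ 2); linarith
  unfold Rlam
  rw [mul_pow, div_pow, one_pow, h2, Real.sq_sqrt hX]
  ring

lemma Rlam_continuous (α β : ℝ) : Continuous (fun lam => Rlam α β lam) := by
  unfold Rlam Clam
  fun_prop

lemma Rlam_le_Rmax {μ L α β lam : ℝ} (h : lam ∈ Set.Icc μ L) :
    Rlam α β lam ≤ Rmax μ L α β := by
  apply le_csSup
  · exact ((isCompact_Icc).image_of_continuousOn (Rlam_continuous α β).continuousOn).bddAbove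
  · exact Set.mem_image_of_mem _ h

lemma Rmax_nonneg {μ L : ℝ} (hμL : μ ≤ L) (α β : ℝ) : 0 ≤ Rmax μ L α β :=
  (Rlam_nonneg α β μ).trans (Rlam_le_Rmax ⟨le_refl _, hμL⟩)
notation "E[" d "]" => EuclideanSpace ℝ (Fin d)

lemma parseval {d : ℕ} (b : OrthonormalBasis (Fin d) ℝ (E[d])) (v : E[d]) :
    ‖v‖^2 = ∑ j, (inner ℝ (b j) v : ℝ)^2 := by
  have h : ‖v‖ = ‖b.repr v‖ := (b.repr.norm_map v).symm
  rw [h, EuclideanSpace.norm_eq]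
  rw [Real.sq_sqrt (by positivity)]
  congr 1; ext j
  rw [b.repr_apply_apply]
  simp [Real.norm_eq_abs, sq_abs]

-- step bound for the 2x2 block operator
lemma step_bound {d : ℕ} {μ L : ℝ} (α β : ℝ) (hμL : μ ≤ L)
    (H : E[d] →L[ℝ] E[d])
    (hsym : ∀ v w : E[d], (inner ℝ (H v) w : ℝ) = inner ℝ v (H w))
    (hlo : ∀ v : E[d], μ * ‖v‖^2 ≤ inner ℝ (H v) v)
    (hhi : ∀ v : E[d], (inner ℝ (H v) v : ℝ) ≤ L * ‖v‖^2)
    (u w : E[d]) :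
    ‖u - (α*(1+β)) • H u - β^2 • w‖^2 + ‖α • H u + β • w‖^2 ≤
      (Rmax μ L α β)^2 * (‖u‖^2 + ‖w‖^2) := by
  have hT : (H : E[d] →ₗ[ℝ] E[d]).IsSymmetric := fun v w => hsym v w
  have hrank : Module.finrank ℝ (E[d]) = d := finrank_euclideanSpace_fin
  set b := hT.eigenvectorBasis hrank with hb
  set lam := hT.eigenvalues hrank with hlam
  have happly : ∀ j, H (b j) = lam j • b j := fun j => hT.apply_eigenvectorBasis hrank j
  have hnorm1 : ∀ j, ‖b j‖ = 1 := fun j => b.orthonormal.1 j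
  have hlamval : ∀ j, (inner ℝ (H (b j)) (b j) : ℝ) = lam j := by
    intro j
    rw [happly j, real_inner_smul_left, real_inner_self_eq_norm_sq, hnorm1 j]
    simp
  have hlamlo : ∀ j, μ ≤ lam j := by
    intro j; have := hlo (b j); rw [hlamval j, hnorm1 j] at this; simpa using this
  have hlamhi : ∀ j, lam j ≤ L := by
    intro j; have := hhi (b j); rw [hlamval j, hnorm1 j] at this; simpa using this
  -- coordinates
  have hcoordH : ∀ (j) (v : E[d]), (inner ℝ (b j) (H v) : ℝ) = lam j * inner ℝ (b j) v := by
    intro j v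
    rw [real_inner_comm, hsym, real_inner_comm v, happly j, real_inner_smul_right]
  have key : ∀ j, (inner ℝ (b j) (u - (α*(1+β)) • H u - β^2 • w) : ℝ)^2 +
      (inner ℝ (b j) (α • H u + β • w) : ℝ)^2 ≤
      (Rmax μ L α β)^2 * ((inner ℝ (b j) u : ℝ)^2 + (inner ℝ (b j) w : ℝ)^2) := by
    intro j
    set uj := (inner ℝ (b j) u : ℝ)
    set wj := (inner ℝ (b j) w : ℝ)
    have e1 : (inner ℝ (b j) (u - (α*(1+β)) • H u - β^2 • w) : ℝ) =
        (1 - α*(1+β)*lam j) * uj + (-(β^2)) * wj := by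
      rw [inner_sub_right, inner_sub_right, real_inner_smul_right, real_inner_smul_right, hcoordH]
      ring
    have e2 : (inner ℝ (b j) (α • H u + β • w) : ℝ) = (α * lam j) * uj + β * wj := by
      rw [inner_add_right, real_inner_smul_right, real_inner_smul_right, hcoordH]
      ring
    rw [e1, e2]
    have h2x2 := two_by_two_bound (1 - α*(1+β)*lam j) (-(β^2)) (α * lam j) β uj wj
    have hC : (1 - α*(1+β)*lam j)^2 + (-(β^2))^2 + (α * lam j)^2 + β^2 = Clam α β (lam j) := by
      unfold Clam; ring
    have hD : ((1 - α*(1+β)*lam j) * β - (-(β^2)) * (α * lam j))^2 = β^2*(1-α*lam j)^2 := by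
      ring
    rw [hC] at h2x2
    have hD4 : (Clam α β (lam j))^2 - 4*((1 - α*(1+β)*lam j) * β - (-(β^2)) * (α * lam j))^2
        = (Clam α β (lam j))^2 - 4*β^2*(1-α*lam j)^2 := by rw [hD]; ring
    rw [hD4] at h2x2
    refine h2x2.trans ?_
    apply mul_le_mul_of_nonneg_right _ (by positivity)
    rw [← Rlam_sq]
    have h1 : Rlam α β (lam j) ≤ Rmax μ L α β := Rlam_le_Rmax ⟨hlamlo j, hlamhi j⟩
    exact pow_le_pow_left₀ (Rlam_nonneg α β (lam j)) h1 2
  calc ‖u - (α*(1+β)) • H u - β^2 • w‖^2 + ‖α • H u + β • w‖^2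
      = ∑ j, ((inner ℝ (b j) (u - (α*(1+β)) • H u - β^2 • w) : ℝ)^2 +
          (inner ℝ (b j) (α • H u + β • w) : ℝ)^2) := by
        rw [parseval b, parseval b, Finset.sum_add_distrib]
    _ ≤ ∑ j, (Rmax μ L α β)^2 * ((inner ℝ (b j) u : ℝ)^2 + (inner ℝ (b j) w : ℝ)^2) :=
        Finset.sum_le_sum (fun j _ => key j)
    _ = (Rmax μ L α β)^2 * (‖u‖^2 + ‖w‖^2) := by
        rw [← Finset.mul_sum, parseval b u, parseval b w, Finset.sum_add_distrib]

section Hess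

variable {E : Type*} [NormedAddCommGroup E] [InnerProductSpace ℝ E] [CompleteSpace E]

local notation "⟪" x ", " y "⟫" => @inner ℝ _ _ x y

lemma convex_deriv_le {g : ℝ → ℝ} (hcv : ConvexOn ℝ Set.univ g) {D : ℝ}
    (hd : HasDerivAt g D 0) : D ≤ g 1 - g 0 := by
  have hslope : ∀ t ∈ Set.Ioc (0:ℝ) 1, slope g 0 t ≤ g 1 - g 0 := by
    intro t ht
    have hcc : g (t • 1 + (1-t) • 0) ≤ t * g 1 + (1-t) * g 0 :=
      hcv.2 (Set.mem_univ _) (Set.mem_univ _) ht.1.le (by linarith [ht.2]) (by ring)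
    have h1 : g t ≤ t * g 1 + (1-t) * g 0 := by simpa using hcc
    rw [slope_def_field]
    rw [div_le_iff₀ (by linarith [ht.1])]
    ring_nf
    nlinarith [ht.1]
  have htend : Filter.Tendsto (slope g 0) (nhdsWithin 0 (Set.Ioi 0)) (nhds D) :=
    (hasDerivAt_iff_tendsto_slope.mp hd).mono_left
      (nhdsWithin_mono 0 (fun x hx => ne_of_gt hx))
  refine le_of_tendsto htend ?_
  filter_upwards [Ioc_mem_nhdsGT (by norm_num : (0:ℝ) < 1)] with t ht
  exact hslope t ht

lemma line_deriv_h {μ : ℝ} {f : E → ℝ} (hf : Differentiable ℝ f) (z w : E) :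
    HasDerivAt (fun s : ℝ => f (z + s • w) - μ/2 * ‖z + s • w‖^2)
      (fderiv ℝ f z w - μ * ⟪z, w⟫) 0 := by
  have hline : HasDerivAt (fun s : ℝ => z + s • w) w 0 := by
    simpa using ((hasDerivAt_id (0:ℝ)).smul_const w).const_add z
  have h1 : HasDerivAt (fun s : ℝ => f (z + s • w)) (fderiv ℝ f z w) 0 := by
    have := ((hf (z + (0:ℝ) • w)).hasFDerivAt).comp_hasDerivAt 0 hline
    simp only [zero_smul, add_zero] at this
    exact this
  have h2 : HasDerivAt (fun s : ℝ => ⟪z + s • w, z + s • w⟫) (2 * ⟪z, w⟫) 0 := by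
    have := (hline.inner ℝ hline)
    simp only [zero_smul, add_zero] at this
    have e : (2 * ⟪z, w⟫) = ⟪z, w⟫ + ⟪w, z⟫ := by rw [real_inner_comm w z]; ring
    rw [e]; exact this
  have h3 : HasDerivAt (fun s : ℝ => μ/2 * ‖z + s • w‖^2) (μ * ⟪z, w⟫) 0 := by
    have h4 : HasDerivAt (fun s : ℝ => μ/2 * ⟪z + s • w, z + s • w⟫) (μ/2 * (2 * ⟪z, w⟫)) 0 :=
      h2.const_mul (μ/2)
    have : (fun s : ℝ => μ/2 * ⟪z + s • w, z + s • w⟫) = (fun s : ℝ => μ/2 * ‖z + s • w‖^2) := by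
      funext s; rw [real_inner_self_eq_norm_sq]
    rw [this] at h4
    convert h4 using 1; ring
  exact h1.sub h3

lemma grad_inner {f : E → ℝ} (z w : E) : ⟪gradient f z, w⟫ = fderiv ℝ f z w :=
  InnerProductSpace.toDual_symm_apply

lemma grad_strong_mono {μ : ℝ} {f : E → ℝ} (hC2 : ContDiff ℝ 2 f)
    (hsc : StrongConvexOn Set.univ μ f) (a c : E) :
    μ * ‖a - c‖^2 ≤ ⟪gradient f a - gradient f c, a - c⟫ := by
  have hf : Differentiable ℝ f := hC2.differentiable (by norm_num)
  set h : E → ℝ := fun x => f x - μ/2 * ‖x‖^2 with hh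
  have hconv : ConvexOn ℝ Set.univ h := by
    have := (strongConvexOn_iff_convex).mp hsc
    convert this using 2
  have key : ∀ z w : E, fderiv ℝ f z w - μ * ⟪z, w⟫ ≤ h (z + w) - h z := by
    intro z w
    have hcomp : ConvexOn ℝ Set.univ (fun s : ℝ => h (z + s • w)) := by
      have := hconv.comp_affineMap (AffineMap.lineMap z (z + w))
      simp only [Set.preimage_univ] at this
      have heq : (fun s : ℝ => h (z + s • w)) = h ∘ AffineMap.lineMap z (z + w) := by
        funext s
        simp [AffineMap.lineMap_apply, h, add_comm]
      rw [heq]; exact this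
    have hd := line_deriv_h (μ := μ) hf z w
    have := convex_deriv_le hcomp hd
    simpa using this
  have k1 := key c (a - c)
  have k2 := key a (c - a)
  simp only [add_sub_cancel] at k1 k2
  have e1 : ⟪gradient f a - gradient f c, a - c⟫ =
      fderiv ℝ f a (a - c) - fderiv ℝ f c (a - c) := by
    rw [inner_sub_left, grad_inner, grad_inner]
  have e2 : fderiv ℝ f a (c - a) = - fderiv ℝ f a (a - c) := by
    rw [← map_neg]; congr 1; abel
  rw [e2] at k2
  have einner : ⟪c, a - c⟫ + ⟪a, c - a⟫ = - ⟪a - c, a - c⟫ := by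
    simp only [inner_sub_left, inner_sub_right]
    ring
  rw [e1]
  have hnorm : ⟪a - c, a - c⟫ = ‖a - c‖^2 := real_inner_self_eq_norm_sq _
  have e3 : μ * (⟪c, a - c⟫ + ⟪a, c - a⟫) = μ * (-‖a - c‖^2) := by rw [einner, hnorm]
  linarith [k1, k2, e3]
lemma gradient_eq_comp (f : E → ℝ) :
    gradient f = ⇑(InnerProductSpace.toDual ℝ E).symm ∘ fderiv ℝ f := rfl

lemma gradient_contDiff {f : E → ℝ} (hC2 : ContDiff ℝ 2 f) :
    ContDiff ℝ 1 (gradient f) := by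
  rw [gradient_eq_comp]
  exact (InnerProductSpace.toDual ℝ E).symm.contDiff.comp
    (hC2.fderiv_right (by norm_num))

lemma hess_hasFDerivAt {f : E → ℝ} (hC2 : ContDiff ℝ 2 f) (z : E) :
    HasFDerivAt (gradient f) (fderiv ℝ (gradient f) z) z :=
  (((gradient_contDiff hC2).differentiable (by norm_num)) z).hasFDerivAt

lemma hess_continuous {f : E → ℝ} (hC2 : ContDiff ℝ 2 f) :
    Continuous (fun z => fderiv ℝ (gradient f) z) :=
  (gradient_contDiff hC2).continuous_fderiv (by norm_num)

lemma hess_symm {f : E → ℝ} (hC2 : ContDiff ℝ 2 f) (z v w : E) :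
    ⟪fderiv ℝ (gradient f) z v, w⟫ = ⟪v, fderiv ℝ (gradient f) z w⟫ := by
  have hfd : Differentiable ℝ f := hC2.differentiable (by norm_num)
  have hf'd : Differentiable ℝ (fderiv ℝ f) :=
    (hC2.fderiv_right (m := 1) (by norm_num)).differentiable (by norm_num)
  have happ : ∀ u u' : E, ⟪u', fderiv ℝ (gradient f) z u⟫ = fderiv ℝ (fderiv ℝ f) z u u' := by
    intro u u'
    have h1 : HasFDerivAt (fun x => fderiv ℝ f x u')
        ((ContinuousLinearMap.apply ℝ ℝ u').comp (fderiv ℝ (fderiv ℝ f) z)) z :=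
      (ContinuousLinearMap.apply ℝ ℝ u').hasFDerivAt.comp z ((hf'd z).hasFDerivAt)
    have h2 : HasFDerivAt (fun x => ⟪u', gradient f x⟫)
        ((innerSL ℝ u').comp (fderiv ℝ (gradient f) z)) z :=
      (innerSL ℝ u').hasFDerivAt.comp z (hess_hasFDerivAt hC2 z)
    have heq : (fun x => ⟪u', gradient f x⟫) = (fun x => fderiv ℝ f x u') := by
      funext x
      rw [real_inner_comm]
      exact InnerProductSpace.toDual_symm_apply
    rw [heq] at h2
    have := h2.unique h1
    calc ⟪u', fderiv ℝ (gradient f) z u⟫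
        = ((innerSL ℝ u').comp (fderiv ℝ (gradient f) z)) u := rfl
      _ = ((ContinuousLinearMap.apply ℝ ℝ u').comp (fderiv ℝ (fderiv ℝ f) z)) u := by rw [this]
      _ = fderiv ℝ (fderiv ℝ f) z u u' := rfl
  rw [real_inner_comm w ((fderiv ℝ (gradient f) z) v), happ v w, happ w v]
  exact second_derivative_symmetric (fun y => (hfd y).hasFDerivAt)
    ((hf'd z).hasFDerivAt) v w
lemma hess_line_hasDerivAt {f : E → ℝ} (hC2 : ContDiff ℝ 2 f) (z v : E) (t : ℝ) :
    HasDerivAt (fun s : ℝ => gradient f (z + s • v))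
      (fderiv ℝ (gradient f) (z + t • v) v) t := by
  have hline : HasDerivAt (fun s : ℝ => z + s • v) v t := by
    simpa using ((hasDerivAt_id t).smul_const v).const_add z
  exact (hess_hasFDerivAt hC2 (z + t • v)).comp_hasDerivAt t hline

lemma hess_inner_hasDerivAt {f : E → ℝ} (hC2 : ContDiff ℝ 2 f) (z v : E) :
    HasDerivAt (fun s : ℝ => ⟪v, gradient f (z + s • v)⟫)
      ⟪v, fderiv ℝ (gradient f) z v⟫ 0 := by
  have h1 := hess_line_hasDerivAt hC2 z v 0
  simp only [zero_smul, add_zero] at h1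
  have := (hasDerivAt_const (0:ℝ) v).inner ℝ h1
  simpa using this

lemma hess_lower {μ : ℝ} {f : E → ℝ} (hC2 : ContDiff ℝ 2 f)
    (hsc : StrongConvexOn Set.univ μ f) (z v : E) :
    μ * ‖v‖^2 ≤ ⟪fderiv ℝ (gradient f) z v, v⟫ := by
  rw [real_inner_comm]
  have hd := hess_inner_hasDerivAt hC2 z v
  have htend : Filter.Tendsto (slope (fun s : ℝ => ⟪v, gradient f (z + s • v)⟫) 0)
      (nhdsWithin 0 (Set.Ioi 0)) (nhds ⟪v, fderiv ℝ (gradient f) z v⟫) :=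
    (hasDerivAt_iff_tendsto_slope.mp hd).mono_left
      (nhdsWithin_mono 0 (fun x hx => ne_of_gt hx))
  refine ge_of_tendsto htend ?_
  filter_upwards [self_mem_nhdsWithin] with s hs
  have hs0 : (0:ℝ) < s := hs
  have hm := grad_strong_mono hC2 hsc (z + s • v) z
  simp only [add_sub_cancel_left] at hm
  have hn : ‖s • v‖^2 = s^2 * ‖v‖^2 := by
    rw [norm_smul, mul_pow, Real.norm_eq_abs, sq_abs]
  rw [hn, real_inner_smul_right] at hm
  have e : ⟪v, gradient f (z + s • v)⟫ - ⟪v, gradient f z⟫ =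
      ⟪gradient f (z + s • v) - gradient f z, v⟫ := by
    rw [inner_sub_left, real_inner_comm, real_inner_comm v (gradient f z)]
  rw [slope_def_field]
  simp only [zero_smul, add_zero, sub_zero]
  rw [e, le_div_iff₀ hs0]
  nlinarith [hm]

lemma hess_upper {L : ℝ} {f : E → ℝ} (hC2 : ContDiff ℝ 2 f)
    (hsm : ∀ u v, ‖gradient f u - gradient f v‖ ≤ L * ‖u - v‖) (z v : E) :
    ⟪fderiv ℝ (gradient f) z v, v⟫ ≤ L * ‖v‖^2 := by
  rw [real_inner_comm]
  have hd := hess_inner_hasDerivAt hC2 z v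
  have htend : Filter.Tendsto (slope (fun s : ℝ => ⟪v, gradient f (z + s • v)⟫) 0)
      (nhdsWithin 0 (Set.Ioi 0)) (nhds ⟪v, fderiv ℝ (gradient f) z v⟫) :=
    (hasDerivAt_iff_tendsto_slope.mp hd).mono_left
      (nhdsWithin_mono 0 (fun x hx => ne_of_gt hx))
  refine le_of_tendsto htend ?_
  filter_upwards [self_mem_nhdsWithin] with s hs
  have hs0 : (0:ℝ) < s := hs
  have hL := hsm (z + s • v) z
  simp only [add_sub_cancel_left] at hL
  rw [norm_smul, Real.norm_eq_abs, abs_of_pos hs0] at hL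
  have e : ⟪v, gradient f (z + s • v)⟫ - ⟪v, gradient f z⟫ =
      ⟪gradient f (z + s • v) - gradient f z, v⟫ := by
    rw [inner_sub_left, real_inner_comm, real_inner_comm v (gradient f z)]
  have hcs : ⟪gradient f (z + s • v) - gradient f z, v⟫ ≤ L * (s * ‖v‖) * ‖v‖ :=
    (real_inner_le_norm _ _).trans (by
      apply mul_le_mul_of_nonneg_right hL (norm_nonneg v))
  rw [slope_def_field]
  simp only [zero_smul, add_zero, sub_zero]
  rw [e, div_le_iff₀ hs0]
  nlinarith [hcs]
/-- Averaged Hessian for a single function along the segment from `p` to `q`. -/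
lemma exists_avg_hessian {μ L : ℝ} {f : E → ℝ} (hC2 : ContDiff ℝ 2 f)
    (hsc : StrongConvexOn Set.univ μ f)
    (hsm : ∀ u v, ‖gradient f u - gradient f v‖ ≤ L * ‖u - v‖) (p q : E) :
    ∃ H : E →L[ℝ] E, (∀ v w, ⟪H v, w⟫ = ⟪v, H w⟫) ∧
      (∀ v, μ * ‖v‖^2 ≤ ⟪H v, v⟫) ∧ (∀ v, ⟪H v, v⟫ ≤ L * ‖v‖^2) ∧
      H (q - p) = gradient f q - gradient f p := by
  set S : E → E →L[ℝ] E := fun z => fderiv ℝ (gradient f) z with hS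
  set c : ℝ → E := fun t => p + t • (q - p) with hc
  have hccont : Continuous c := by fun_prop
  have hSc : Continuous fun t => S (c t) := (hess_continuous hC2).comp hccont
  have hII : IntervalIntegrable (fun t => S (c t)) volume 0 1 := hSc.intervalIntegrable 0 1
  refine ⟨∫ t in (0:ℝ)..1, S (c t), ?_, ?_, ?_, ?_⟩
  · intro v w
    have hIIv : IntervalIntegrable (fun t => S (c t) v) volume 0 1 := by
      exact (hSc.clm_apply continuous_const).intervalIntegrable 0 1
    have hIIw : IntervalIntegrable (fun t => S (c t) w) volume 0 1 := by
      exact (hSc.clm_apply continuous_const).intervalIntegrable 0 1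
    have h1 : (∫ t in (0:ℝ)..1, S (c t)) v = ∫ t in (0:ℝ)..1, S (c t) v :=
      ContinuousLinearMap.intervalIntegral_apply hII v
    have h2 : (∫ t in (0:ℝ)..1, S (c t)) w = ∫ t in (0:ℝ)..1, S (c t) w :=
      ContinuousLinearMap.intervalIntegral_apply hII w
    rw [h1, h2, real_inner_comm]
    simp only [← innerSL_apply_apply (𝕜 := ℝ)]
    rw [← (innerSL ℝ w).intervalIntegral_comp_comm hIIv,
        ← (innerSL ℝ v).intervalIntegral_comp_comm hIIw]
    apply intervalIntegral.integral_congr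
    intro t _
    simp only [innerSL_apply_apply]
    rw [real_inner_comm]
    exact hess_symm hC2 (c t) v w
  · intro v
    have hIIv : IntervalIntegrable (fun t => S (c t) v) volume 0 1 :=
      (hSc.clm_apply continuous_const).intervalIntegrable 0 1
    have h1 : (∫ t in (0:ℝ)..1, S (c t)) v = ∫ t in (0:ℝ)..1, S (c t) v :=
      ContinuousLinearMap.intervalIntegral_apply hII v
    rw [h1, real_inner_comm]
    simp only [← innerSL_apply_apply (𝕜 := ℝ)]
    rw [← (innerSL ℝ v).intervalIntegral_comp_comm hIIv]
    have hcontin : Continuous fun t => (innerSL ℝ v) (S (c t) v) :=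
      (innerSL ℝ v).continuous.comp (hSc.clm_apply continuous_const)
    have : μ * ‖v‖^2 = ∫ t in (0:ℝ)..1, μ * ‖v‖^2 := by simp
    rw [this]
    apply intervalIntegral.integral_mono_on (by norm_num)
      (intervalIntegrable_const) (hcontin.intervalIntegrable 0 1)
    intro t _
    simp only [innerSL_apply_apply]
    rw [real_inner_comm]
    exact hess_lower hC2 hsc (c t) v
  · intro v
    have hIIv : IntervalIntegrable (fun t => S (c t) v) volume 0 1 :=
      (hSc.clm_apply continuous_const).intervalIntegrable 0 1
    have h1 : (∫ t in (0:ℝ)..1, S (c t)) v = ∫ t in (0:ℝ)..1, S (c t) v :=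
      ContinuousLinearMap.intervalIntegral_apply hII v
    rw [h1, real_inner_comm]
    simp only [← innerSL_apply_apply (𝕜 := ℝ)]
    rw [← (innerSL ℝ v).intervalIntegral_comp_comm hIIv]
    have hcontin : Continuous fun t => (innerSL ℝ v) (S (c t) v) :=
      (innerSL ℝ v).continuous.comp (hSc.clm_apply continuous_const)
    have : L * ‖v‖^2 = ∫ t in (0:ℝ)..1, L * ‖v‖^2 := by simp
    rw [this]
    apply intervalIntegral.integral_mono_on (by norm_num)
      (hcontin.intervalIntegrable 0 1) (intervalIntegrable_const)
    intro t _
    simp only [innerSL_apply_apply]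
    rw [real_inner_comm]
    exact hess_upper hC2 hsm (c t) v
  · have happly : (∫ t in (0:ℝ)..1, S (c t)) (q - p) = ∫ t in (0:ℝ)..1, S (c t) (q - p) :=
      ContinuousLinearMap.intervalIntegral_apply hII _
    rw [happly]
    have hder : ∀ t ∈ Set.uIcc (0:ℝ) 1, HasDerivAt (fun s => gradient f (c s)) (S (c t) (q-p)) t := by
      intro t _
      have hline : HasDerivAt c (q - p) t := by
        simpa [hc] using ((hasDerivAt_id t).smul_const (q-p)).const_add p
      exact (hess_hasFDerivAt hC2 (c t)).comp_hasDerivAt t hline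
    have hftc := intervalIntegral.integral_eq_sub_of_hasDerivAt hder
      ((hSc.clm_apply continuous_const).intervalIntegrable 0 1)
    rw [hftc]
    simp [hc]
lemma exists_combined_hessian {n : ℕ} {μ L : ℝ} {f : Fin n → E → ℝ}
    (hC2 : ∀ i, ContDiff ℝ 2 (f i)) (hsc : ∀ i, StrongConvexOn Set.univ μ (f i))
    (hsm : ∀ i u v, ‖gradient (f i) u - gradient (f i) v‖ ≤ L * ‖u - v‖)
    (c : Fin n → ℝ) (hcnn : ∀ i, 0 ≤ c i) (hcsum : ∑ i, c i = 1) (p q : E) :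
    ∃ H : E →L[ℝ] E, (∀ v w, ⟪H v, w⟫ = ⟪v, H w⟫) ∧
      (∀ v, μ * ‖v‖^2 ≤ ⟪H v, v⟫) ∧ (∀ v, ⟪H v, v⟫ ≤ L * ‖v‖^2) ∧
      H (q - p) = ∑ i, c i • (gradient (f i) q - gradient (f i) p) := by
  have hch : ∀ i : Fin n, ∃ H : E →L[ℝ] E, (∀ v w, ⟪H v, w⟫ = ⟪v, H w⟫) ∧
      (∀ v, μ * ‖v‖^2 ≤ ⟪H v, v⟫) ∧ (∀ v, ⟪H v, v⟫ ≤ L * ‖v‖^2) ∧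
      H (q - p) = gradient (f i) q - gradient (f i) p :=
    fun i => exists_avg_hessian (hC2 i) (hsc i) (hsm i) p q
  choose Hi hsymi hloi hhii happi using hch
  refine ⟨∑ i, c i • Hi i, ?_, ?_, ?_, ?_⟩
  · intro v w
    simp only [ContinuousLinearMap.sum_apply, ContinuousLinearMap.smul_apply,
      sum_inner, inner_sum, inner_smul_left, inner_smul_right, RCLike.star_def,
      starRingEnd_apply, star_trivial]
    exact Finset.sum_congr rfl (fun i _ => by rw [hsymi i v w])
  · intro v
    have : ∀ i ∈ Finset.univ, c i * (μ * ‖v‖^2) ≤ c i * ⟪Hi i v, v⟫ :=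
      fun i _ => mul_le_mul_of_nonneg_left (hloi i v) (hcnn i)
    have hsum := Finset.sum_le_sum this
    rw [← Finset.sum_mul, hcsum, one_mul] at hsum
    refine hsum.trans_eq ?_
    simp only [ContinuousLinearMap.sum_apply, ContinuousLinearMap.smul_apply, sum_inner,
      real_inner_smul_left]
  · intro v
    have : ∀ i ∈ Finset.univ, c i * ⟪Hi i v, v⟫ ≤ c i * (L * ‖v‖^2) :=
      fun i _ => mul_le_mul_of_nonneg_left (hhii i v) (hcnn i)
    have hsum := Finset.sum_le_sum this
    rw [← Finset.sum_mul, hcsum, one_mul] at hsum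
    refine Eq.trans_le ?_ hsum
    simp only [ContinuousLinearMap.sum_apply, ContinuousLinearMap.smul_apply, sum_inner,
      real_inner_smul_left]
  · simp only [ContinuousLinearMap.sum_apply, ContinuousLinearMap.smul_apply]
    exact Finset.sum_congr rfl (fun i _ => by rw [happi i])

end Hess


lemma l2_triangle {a b c d : ℝ} (ha : 0 ≤ a) (hb : 0 ≤ b) (hc : 0 ≤ c) (hd : 0 ≤ d) :
    Real.sqrt ((a+b)^2+(c+d)^2) ≤ Real.sqrt (a^2+c^2) + Real.sqrt (b^2+d^2) := by
  set s := Real.sqrt (a^2+c^2) with hs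
  set t := Real.sqrt (b^2+d^2) with ht
  have hs0 : 0 ≤ s := Real.sqrt_nonneg _
  have ht0 : 0 ≤ t := Real.sqrt_nonneg _
  have hs2 : s^2 = a^2+c^2 := Real.sq_sqrt (by positivity)
  have ht2 : t^2 = b^2+d^2 := Real.sq_sqrt (by positivity)
  have hst : a*b+c*d ≤ s*t := by
    have h1 : (a*b+c*d)^2 ≤ (s*t)^2 := by nlinarith [sq_nonneg (a*d-b*c)]
    nlinarith [mul_nonneg hs0 ht0]
  have : (a+b)^2+(c+d)^2 ≤ (s+t)^2 := by nlinarith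
  calc Real.sqrt ((a+b)^2+(c+d)^2) ≤ Real.sqrt ((s+t)^2) := Real.sqrt_le_sqrt this
    _ = s + t := Real.sqrt_sq (by linarith)

/-- In the finite-sum setting with mini-batch gradients
`g_k = Σ_i ν_{k,i} ∇f_i(y_k)` (nonnegative sampling weights summing to 1 with marginal
expectations `1/n`), if `R(α, β) < 1` then for all `k ≥ 0`:
`E‖y_{k+1} − x*‖ ≤ R(α,β)^k ‖x₀ − x*‖ + (α√((1+β)²+1)/(1 − R(α,β))) σ`,
where `σ = (1/n) Σ_i ‖∇f_i(x*)‖`. -/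
theorem stmt5 {d : ℕ} (n : ℕ) (hn : 1 ≤ n)
    (μ L : ℝ) (hμ : 0 < μ) (hμL : μ ≤ L)
    (f : Fin n → EuclideanSpace ℝ (Fin d) → ℝ)
    (hC2 : ∀ i, ContDiff ℝ 2 (f i))
    (hsc : ∀ i, StrongConvexOn Set.univ μ (f i))
    (hsmooth : ∀ i u v, ‖gradient (f i) u - gradient (f i) v‖ ≤ L * ‖u - v‖)
    (xstar : EuclideanSpace ℝ (Fin d))
    (hmin : ∀ v, (1 / (n : ℝ)) * ∑ i, f i xstar ≤ (1 / (n : ℝ)) * ∑ i, f i v)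
    {Ω : Type*} [MeasurableSpace Ω] (P : Measure Ω) [IsProbabilityMeasure P]
    (ν : ℕ → Ω → Fin n → ℝ)
    (hνmeas : ∀ k, Measurable (ν k))
    (hνnonneg : ∀ k ω i, 0 ≤ ν k ω i)
    (hνsum : ∀ k ω, ∑ i, ν k ω i = 1)
    (hνmean : ∀ k i, ∫ ω, ν k ω i ∂P = 1 / (n : ℝ))
    (α β : ℝ) (hα : 0 < α)
    (hR : Rmax μ L α β < 1)
    (x0 : EuclideanSpace ℝ (Fin d))
    (x y : ℕ → Ω → EuclideanSpace ℝ (Fin d))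
    (hx0 : ∀ ω, x 0 ω = x0)
    (hy1 : ∀ ω, y 1 ω = x 0 ω)
    (hy : ∀ k ω, y (k + 2) ω = x (k + 1) ω + β • (x (k + 1) ω - x k ω))
    (hx : ∀ k ω, x (k + 1) ω = y (k + 1) ω -
      α • ∑ i, ν (k + 1) ω i • gradient (f i) (y (k + 1) ω)) :
    ∀ k : ℕ,
      ∫ ω, ‖y (k + 1) ω - xstar‖ ∂P ≤
        Rmax μ L α β ^ k * ‖x0 - xstar‖ +
          α * Real.sqrt ((1 + β) ^ 2 + 1) / (1 - Rmax μ L α β) *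
            ((1 / (n : ℝ)) * ∑ i, ‖gradient (f i) xstar‖) := by
  set r := Rmax μ L α β with hrdef
  have hr0 : 0 ≤ r := Rmax_nonneg hμL α β
  have hr1 : r < 1 := hR
  set cst := α * Real.sqrt ((1 + β) ^ 2 + 1) with hcstdef
  have hcst0 : 0 ≤ cst := by positivity
  set σ' := (1 / (n : ℝ)) * ∑ i, ‖gradient (f i) xstar‖ with hσdef
  have hσ0 : 0 ≤ σ' := by positivity
  set e : ℕ → Ω → EuclideanSpace ℝ (Fin d) :=
    fun k ω => ∑ i, ν k ω i • gradient (f i) xstar with hedef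
  set W : ℕ → Ω → EuclideanSpace ℝ (Fin d) := fun k ω => x (k-1) ω - x k ω with hWdef
  set Z : ℕ → Ω → ℝ :=
    fun k ω => Real.sqrt (‖y (k+1) ω - xstar‖^2 + ‖W k ω‖^2) with hZdef
  have hZnn : ∀ k ω, 0 ≤ Z k ω := fun k ω => Real.sqrt_nonneg _
  -- basic recursions
  have hW0 : ∀ ω, W 0 ω = 0 := by intro ω; simp [hWdef]
  have hWsucc : ∀ k ω, W (k+1) ω = x k ω - x (k+1) ω := by intro k ω; simp [hWdef]
  have hxyW : ∀ k ω, x k ω - y (k+1) ω = β • W k ω := by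
    intro k ω
    cases k with
    | zero => rw [hy1 ω, hW0 ω, smul_zero, sub_self]
    | succ j =>
        rw [hy j ω, hWsucc j ω]
        rw [smul_sub, smul_sub]
        abel
  -- the pointwise contraction step
  have hstep : ∀ k ω, Z (k+1) ω ≤ r * Z k ω + cst * ‖e (k+1) ω‖ := by
    intro k ω
    obtain ⟨H, hsym, hlo, hhi, happ⟩ :=
      exists_combined_hessian hC2 hsc hsmooth (ν (k+1) ω) (hνnonneg (k+1) ω)
        (hνsum (k+1) ω) xstar (y (k+1) ω)
    set u := y (k+1) ω - xstar with hudef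
    set w := W k ω with hwdef
    set g := ∑ i, ν (k+1) ω i • gradient (f i) (y (k+1) ω) with hgdef
    have hg : g = H u + e (k+1) ω := by
      have : H u = g - e (k+1) ω := by
        rw [hudef, happ, hedef, hgdef]
        rw [← Finset.sum_sub_distrib]
        exact Finset.sum_congr rfl (fun i _ => by rw [smul_sub])
      rw [this]; abel
    set U := u - (α*(1+β)) • H u - β^2 • w with hUdef
    set V := α • H u + β • w with hVdef
    have hW' : W (k+1) ω = V + α • e (k+1) ω := by
      rw [hWsucc k ω, hx k ω, ← hgdef]
      have h1 : x k ω - (y (k+1) ω - α • g) = (x k ω - y (k+1) ω) + α • g := by abel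
      rw [h1, hxyW k ω, ← hwdef, hg, hVdef]
      rw [smul_add]
      abel
    have hu' : y (k+2) ω - xstar = U - (α*(1+β)) • e (k+1) ω := by
      have h2 : x (k+1) ω - y (k+2) ω = β • W (k+1) ω := hxyW (k+1) ω
      have h3 : y (k+2) ω - xstar = (x (k+1) ω - xstar) - β • W (k+1) ω := by
        rw [← h2]; abel
      rw [h3, hx k ω, ← hgdef, hW', hg, hUdef, hVdef, hudef]
      module
    -- norms
    have hZ1 : Z (k+1) ω = Real.sqrt (‖U - (α*(1+β)) • e (k+1) ω‖^2 + ‖V + α • e (k+1) ω‖^2) := by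
      rw [hZdef]
      simp only
      rw [hu', hW']
    have hb1 : ‖U - (α*(1+β)) • e (k+1) ω‖ ≤ ‖U‖ + ‖(α*(1+β)) • e (k+1) ω‖ := norm_sub_le _ _
    have hb2 : ‖V + α • e (k+1) ω‖ ≤ ‖V‖ + ‖α • e (k+1) ω‖ := norm_add_le _ _
    have hmono : Z (k+1) ω ≤ Real.sqrt ((‖U‖ + ‖(α*(1+β)) • e (k+1) ω‖)^2 +
        (‖V‖ + ‖α • e (k+1) ω‖)^2) := by
      rw [hZ1]
      apply Real.sqrt_le_sqrt
      have p1 := pow_le_pow_left₀ (norm_nonneg _) hb1 2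
      have p2 := pow_le_pow_left₀ (norm_nonneg _) hb2 2
      linarith
    have htri := l2_triangle (norm_nonneg U) (norm_nonneg ((α*(1+β)) • e (k+1) ω))
      (norm_nonneg V) (norm_nonneg (α • e (k+1) ω))
    have hdet : Real.sqrt (‖U‖^2 + ‖V‖^2) ≤ r * Z k ω := by
      have hsb := step_bound α β hμL H hsym hlo hhi u w
      rw [← hUdef, ← hVdef, ← hrdef] at hsb
      calc Real.sqrt (‖U‖^2 + ‖V‖^2) ≤ Real.sqrt (r^2 * (‖u‖^2 + ‖w‖^2)) :=
            Real.sqrt_le_sqrt hsb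
        _ = r * Real.sqrt (‖u‖^2 + ‖w‖^2) := by
            rw [Real.sqrt_mul (sq_nonneg r), Real.sqrt_sq hr0]
        _ = r * Z k ω := by rw [hZdef]
    have hnoise : Real.sqrt (‖(α*(1+β)) • e (k+1) ω‖^2 + ‖α • e (k+1) ω‖^2) =
        cst * ‖e (k+1) ω‖ := by
      rw [norm_smul, norm_smul, mul_pow, mul_pow, Real.norm_eq_abs, Real.norm_eq_abs,
        sq_abs, sq_abs]
      have : (α*(1+β))^2 * ‖e (k+1) ω‖^2 + α^2 * ‖e (k+1) ω‖^2 =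
          cst^2 * ‖e (k+1) ω‖^2 := by
        have hcs2 : cst^2 = α^2*((1+β)^2+1) := by
          rw [hcstdef, mul_pow, Real.sq_sqrt (by positivity)]
        rw [hcs2]; ring
      rw [this, Real.sqrt_mul (sq_nonneg cst), Real.sqrt_sq hcst0,
        Real.sqrt_sq (norm_nonneg _)]
    calc Z (k+1) ω ≤ Real.sqrt ((‖U‖ + ‖(α*(1+β)) • e (k+1) ω‖)^2 +
        (‖V‖ + ‖α • e (k+1) ω‖)^2) := hmono
      _ ≤ Real.sqrt (‖U‖^2 + ‖V‖^2) +
          Real.sqrt (‖(α*(1+β)) • e (k+1) ω‖^2 + ‖α • e (k+1) ω‖^2) := htri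
      _ ≤ r * Z k ω + cst * ‖e (k+1) ω‖ := by
          rw [hnoise]; exact add_le_add hdet le_rfl
  -- measurability of iterates
  have hmxy : ∀ k, Measurable (x k) ∧ Measurable (y (k+1)) := by
    intro k
    induction k with
    | zero =>
        have hx0' : x 0 = fun _ => x0 := funext hx0
        have hmx0 : Measurable (x 0) := by rw [hx0']; exact measurable_const
        have hy1' : y 1 = x 0 := funext hy1
        exact ⟨hmx0, by rw [hy1']; exact hmx0⟩
    | succ k ih =>
        obtain ⟨ihx, ihy⟩ := ih
        have hgc : ∀ i : Fin n, Continuous (gradient (f i)) :=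
          fun i => (gradient_contDiff (hC2 i)).continuous
        have hmx' : Measurable (x (k+1)) := by
          have hxe : x (k+1) = fun ω => y (k+1) ω -
              α • ∑ i, ν (k+1) ω i • gradient (f i) (y (k+1) ω) := funext (hx k)
          rw [hxe]
          apply ihy.sub
          refine Measurable.const_smul (g := fun ω => ∑ i, ν (k+1) ω i • gradient (f i) (y (k+1) ω)) ?_ α
          apply Finset.measurable_sum
          intro i _
          exact ((measurable_pi_apply i).comp (hνmeas (k+1))).smul ((hgc i).measurable.comp ihy)
        refine ⟨hmx', ?_⟩
        have hye : y (k+2) = fun ω => x (k+1) ω + β • (x (k+1) ω - x k ω) := funext (hy k)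
        rw [hye]
        exact hmx'.add ((hmx'.sub ihx).const_smul β)
  have hmW : ∀ k, Measurable (W k) := fun k => ((hmxy (k-1)).1.sub (hmxy k).1)
  have hmZ : ∀ k, Measurable (Z k) := by
    intro k
    have h1 : Measurable (fun ω => ‖y (k+1) ω - xstar‖^2 + ‖W k ω‖^2) :=
      ((((hmxy k).2.sub measurable_const).norm).pow_const 2).add (((hmW k).norm).pow_const 2)
    exact Real.continuous_sqrt.measurable.comp h1
  have hmej : ∀ k, Measurable (fun ω => ‖e k ω‖) := by
    intro k
    apply Measurable.norm
    apply Finset.measurable_sum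
    intro i _
    exact ((measurable_pi_apply i).comp (hνmeas k)).smul measurable_const
  have hν1 : ∀ k ω i, ν k ω i ≤ 1 := by
    intro k ω i
    have := Finset.single_le_sum (f := ν k ω) (fun j _ => hνnonneg k ω j) (Finset.mem_univ i)
    rw [hνsum k ω] at this
    exact this
  have hebound : ∀ k ω, ‖e k ω‖ ≤ ∑ i, ν k ω i * ‖gradient (f i) xstar‖ := by
    intro k ω
    refine (norm_sum_le _ _).trans ?_
    apply Finset.sum_le_sum; intro i _
    rw [norm_smul, Real.norm_eq_abs, abs_of_nonneg (hνnonneg k ω i)]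
  have hebound' : ∀ k ω, ‖e k ω‖ ≤ ∑ i, ‖gradient (f i) xstar‖ := fun k ω =>
    (hebound k ω).trans (Finset.sum_le_sum (fun i _ =>
      mul_le_of_le_one_left (norm_nonneg _) (hν1 k ω i)))
  have heint : ∀ k, Integrable (fun ω => ‖e k ω‖) P := fun k =>
    (integrable_const (∑ i, ‖gradient (f i) xstar‖)).mono'
      ((hmej k).aestronglyMeasurable)
      (Filter.Eventually.of_forall fun ω => by
        rw [Real.norm_eq_abs, abs_of_nonneg (norm_nonneg _)]; exact hebound' k ω)
  have hνint : ∀ k i, Integrable (fun ω => ν k ω i) P := fun k i =>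
    (integrable_const (1:ℝ)).mono'
      ((measurable_pi_apply i).comp (hνmeas k)).aestronglyMeasurable
      (Filter.Eventually.of_forall fun ω => by
        rw [Real.norm_eq_abs, abs_of_nonneg (hνnonneg k ω i)]; simpa using hν1 k ω i)
  have hEe : ∀ k, ∫ ω, ‖e k ω‖ ∂P ≤ σ' := by
    intro k
    have hgint : Integrable (fun ω => ∑ i, ν k ω i * ‖gradient (f i) xstar‖) P :=
      integrable_finset_sum _ (fun i _ => (hνint k i).mul_const _)
    have h1 : ∫ ω, ‖e k ω‖ ∂P ≤ ∫ ω, ∑ i, ν k ω i * ‖gradient (f i) xstar‖ ∂P :=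
      integral_mono (heint k) hgint (fun ω => hebound k ω)
    refine h1.trans ?_
    rw [integral_finset_sum _ (fun i _ => (hνint k i).mul_const _)]
    have hterm : ∀ i ∈ Finset.univ, ∫ ω, ν k ω i * ‖gradient (f i) xstar‖ ∂P =
        (1/(n:ℝ)) * ‖gradient (f i) xstar‖ := by
      intro i _
      rw [integral_mul_const, hνmean k i, mul_comm]
    rw [Finset.sum_congr rfl hterm, ← Finset.mul_sum]
  have hZ0 : Z 0 = fun _ => ‖x0 - xstar‖ := by
    funext ω
    rw [hZdef]
    simp only
    rw [hW0 ω, hy1 ω, hx0 ω, norm_zero]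
    rw [zero_pow (by norm_num), add_zero, Real.sqrt_sq (norm_nonneg _)]
  have hZint : ∀ k, Integrable (Z k) P := by
    intro k
    induction k with
    | zero => rw [hZ0]; exact integrable_const _
    | succ k ih =>
        apply Integrable.mono' ((ih.const_mul r).add ((heint (k+1)).const_mul cst))
          (hmZ (k+1)).aestronglyMeasurable
        refine Filter.Eventually.of_forall (fun ω => ?_)
        rw [Real.norm_eq_abs, abs_of_nonneg (hZnn (k+1) ω)]
        exact hstep k ω
  have hNstep : ∀ k, ∫ ω, Z (k+1) ω ∂P ≤ r * (∫ ω, Z k ω ∂P) + cst * σ' := by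
    intro k
    have h1 : ∫ ω, Z (k+1) ω ∂P ≤ ∫ ω, (r * Z k ω + cst * ‖e (k+1) ω‖) ∂P :=
      integral_mono (hZint (k+1))
        (((hZint k).const_mul r).add ((heint (k+1)).const_mul cst)) (fun ω => hstep k ω)
    rw [integral_add ((hZint k).const_mul r) ((heint (k+1)).const_mul cst),
      integral_const_mul, integral_const_mul] at h1
    have h2 := mul_le_mul_of_nonneg_left (hEe (k+1)) hcst0
    linarith
  have hN0 : ∫ ω, Z 0 ω ∂P = ‖x0 - xstar‖ := by
    rw [hZ0]
    simp
  set B := cst * σ' / (1 - r) with hBdef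
  have h1r : (0:ℝ) < 1 - r := by linarith
  have hB0 : 0 ≤ B := div_nonneg (mul_nonneg hcst0 hσ0) h1r.le
  have hBfix : r * B + cst * σ' = B := by
    rw [hBdef]
    field_simp
    ring
  have hNk : ∀ k, ∫ ω, Z k ω ∂P ≤ r^k * ‖x0 - xstar‖ + B := by
    intro k
    induction k with
    | zero => rw [hN0, pow_zero, one_mul]; linarith
    | succ k ih =>
        refine (hNstep k).trans ?_
        have h3 := mul_le_mul_of_nonneg_left ih hr0
        calc r * (∫ ω, Z k ω ∂P) + cst * σ' ≤ r * (r^k * ‖x0 - xstar‖ + B) + cst * σ' := by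
              linarith
          _ = r^(k+1) * ‖x0 - xstar‖ + (r * B + cst * σ') := by ring
          _ = r^(k+1) * ‖x0 - xstar‖ + B := by rw [hBfix]
  intro k
  have hyleZ : ∀ ω, ‖y (k+1) ω - xstar‖ ≤ Z k ω := by
    intro ω
    rw [hZdef]
    simp only
    have := Real.sqrt_le_sqrt (le_add_of_nonneg_right (sq_nonneg ‖W k ω‖) :
      ‖y (k+1) ω - xstar‖^2 ≤ ‖y (k+1) ω - xstar‖^2 + ‖W k ω‖^2)
    rwa [Real.sqrt_sq (norm_nonneg _)] at this
  have hyint : Integrable (fun ω => ‖y (k+1) ω - xstar‖) P :=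
    (hZint k).mono' (((hmxy k).2.sub measurable_const).norm.aestronglyMeasurable)
      (Filter.Eventually.of_forall fun ω => by
        rw [Real.norm_eq_abs, abs_of_nonneg (norm_nonneg _)]; exact hyleZ ω)
  have hfinal : ∫ ω, ‖y (k+1) ω - xstar‖ ∂P ≤ ∫ ω, Z k ω ∂P :=
    integral_mono hyint (hZint k) hyleZ
  refine hfinal.trans ((hNk k).trans_eq ?_)
  rw [hBdef, hcstdef]
  ring
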